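/- arXiv:2108.10009 — 4 statements merged into one kernel-verified Lean document; each statement's English description precedes it below -/
import Mathlib

section
/- For any 0 < R < μ_max, the equation μ(I) = R, i.e. (Rμ_max/(θI*²))I² + (R − μ_max − 2Rμ_max/(θI*))I + Rμ_max/θ = 0, has exactly two real roots, both positive, one in (0, I*) and one in (I*, ∞). -/
open Set

/-- The quadratic obtained from solving μ(I) = R for the Haldane growth function. -/
noncomputable def haldaneQuad (μmax θ Istar R I : ℝ) : ℝ :=
  (R * μmax / (θ * Istar ^ 2)) * I ^ 2
    + (R - μmax - 2 * R * μmax / (θ * Istar)) * I + R * μmax / θ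

/-- A quadratic with positive leading coefficient that is positive at 0 and negative at
some `x > 0` has exactly two roots, straddling `x`, both positive. -/
lemma quad_two_roots (a b c x : ℝ) (ha : 0 < a) (hc : 0 < c) (hx : 0 < x)
    (hneg : a * x ^ 2 + b * x + c < 0) :
    ∃ r₁ r₂ : ℝ, 0 < r₁ ∧ r₁ < x ∧ x < r₂ ∧
      a * r₁ ^ 2 + b * r₁ + c = 0 ∧ a * r₂ ^ 2 + b * r₂ + c = 0 ∧
      ∀ I : ℝ, a * I ^ 2 + b * I + c = 0 → I = r₁ ∨ I = r₂ := by
  have hD : 0 < b ^ 2 - 4 * a * c := by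
    nlinarith [sq_nonneg (2 * a * x + b)]
  obtain ⟨s, hs0, hs2⟩ : ∃ s : ℝ, 0 < s ∧ s ^ 2 = b ^ 2 - 4 * a * c :=
    ⟨Real.sqrt (b ^ 2 - 4 * a * c), Real.sqrt_pos.mpr hD, Real.sq_sqrt hD.le⟩
  refine ⟨(-b - s) / (2 * a), (-b + s) / (2 * a), ?_⟩
  set r₁ := (-b - s) / (2 * a) with hr1_def
  set r₂ := (-b + s) / (2 * a) with hr2_def
  have hfac : ∀ I : ℝ, a * I ^ 2 + b * I + c = a * (I - r₁) * (I - r₂) := by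
    intro I
    rw [hr1_def, hr2_def]
    field_simp
    nlinarith [hs2]
  have hr12 : r₁ < r₂ := by
    rw [hr1_def, hr2_def]
    exact div_lt_div_of_pos_right (by linarith) (by linarith)
  have h1 : a * (x - r₁) * (x - r₂) < 0 := by rw [← hfac]; exact hneg
  have h0 : 0 < a * (0 - r₁) * (0 - r₂) := by rw [← hfac]; simpa using hc
  have h1' : (x - r₁) * (x - r₂) < 0 := by
    by_contra h; push_neg at h; nlinarith
  have h0' : 0 < r₁ * r₂ := by
    by_contra h; push_neg at h; nlinarith
  have hxr2 : x < r₂ := by nlinarith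
  have hr1x : r₁ < x := by nlinarith
  have hr2pos : 0 < r₂ := by linarith
  have hr1pos : 0 < r₁ := by
    by_contra h; push_neg at h
    nlinarith [mul_nonneg (neg_nonneg.mpr h) hr2pos.le]
  refine ⟨hr1pos, hr1x, hxr2, ?_, ?_, ?_⟩
  · rw [hfac]; ring
  · rw [hfac]; ring
  · intro I hI
    rw [hfac] at hI
    rcases mul_eq_zero.mp hI with h | h
    · rcases mul_eq_zero.mp h with h' | h'
      · exact absurd h' ha.ne'
      · left; linarith [sub_eq_zero.mp h']
    · right; linarith [sub_eq_zero.mp h]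

theorem stmt2 (μmax θ Istar R : ℝ) (hμ : 0 < μmax) (hθ : 0 < θ) (hI : 0 < Istar)
    (hR0 : 0 < R) (hR : R < μmax) :
    ∃ I₁ I₂ : ℝ, 0 < I₁ ∧ I₁ < Istar ∧ Istar < I₂ ∧
      haldaneQuad μmax θ Istar R I₁ = 0 ∧ haldaneQuad μmax θ Istar R I₂ = 0 ∧
      ∀ I : ℝ, haldaneQuad μmax θ Istar R I = 0 → I = I₁ ∨ I = I₂ := by
  have ha : 0 < R * μmax / (θ * Istar ^ 2) := by positivity
  have hc : 0 < R * μmax / θ := by positivity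
  have hneg : R * μmax / (θ * Istar ^ 2) * Istar ^ 2
      + (R - μmax - 2 * R * μmax / (θ * Istar)) * Istar + R * μmax / θ < 0 := by
    have heq : R * μmax / (θ * Istar ^ 2) * Istar ^ 2
        + (R - μmax - 2 * R * μmax / (θ * Istar)) * Istar + R * μmax / θ
        = (R - μmax) * Istar := by
      field_simp
      ring
    rw [heq]
    have : R - μmax < 0 := by linarith
    nlinarith
  obtain ⟨r₁, r₂, h1, h2, h3, h4, h5, h6⟩ :=
    quad_two_roots (R * μmax / (θ * Istar ^ 2)) (R - μmax - 2 * R * μmax / (θ * Istar))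
      (R * μmax / θ) Istar ha hc hI hneg
  exact ⟨r₁, r₂, h1, h2, h3, h4, h5, h6⟩
end

section
/- If the extinction function is ε(X) = α₀X (i.e. α₁ = 0 and s = 1 with α₀ > 0), then the surface productivity Π(X,h) = (μ̄(X,h) − R)·X·h equals P(ε(X)h)/α₀ where P(Y) = ∫_0^Y(μ(I_s e^{−y}) − R)dy; consequently any pair (X,h) with ε(X)h = Y_opt globally maximizes Π over (0,∞)², and the optimal surface biomass is Xh = Y_opt/α₀. -/
open Real Set intervalIntegral

/-- Haldane growth rate. -/
noncomputable def haldane (μmax θ Istar I : ℝ) : ℝ :=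
  μmax * I / (I + (μmax / θ) * (I / Istar - 1) ^ 2)

/-- Optical depth productivity P(Y) = ∫₀^Y (μ(I_s e^{−y}) − R) dy. -/
noncomputable def opticalP (μmax θ Istar Is R Y : ℝ) : ℝ :=
  ∫ y in (0 : ℝ)..Y, (haldane μmax θ Istar (Is * Real.exp (-y)) - R)

/-- Mean growth rate μ̄(X,h) for extinction coefficient ε. -/
noncomputable def meanMu (μmax θ Istar Is : ℝ) (ε : ℝ → ℝ) (X h : ℝ) : ℝ :=
  (1 / (ε X * h)) * ∫ y in (0 : ℝ)..(ε X * h), haldane μmax θ Istar (Is * Real.exp (-y))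

/-- Surface biomass productivity Π(X,h) = (μ̄(X,h) − R)·X·h. -/
noncomputable def surfProd (μmax θ Istar Is R : ℝ) (ε : ℝ → ℝ) (X h : ℝ) : ℝ :=
  (meanMu μmax θ Istar Is ε X h - R) * X * h

lemma haldane_cont (μmax θ Istar Is : ℝ) (hμ : 0 < μmax) (hθ : 0 < θ)
    (hIs : 0 < Is) :
    Continuous fun y : ℝ => haldane μmax θ Istar (Is * Real.exp (-y)) := by
  unfold haldane
  apply Continuous.div (by fun_prop) (by fun_prop)
  intro y
  have h1 : 0 < Is * Real.exp (-y) := by positivity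
  have h2 : 0 ≤ (μmax / θ) * (Is * Real.exp (-y) / Istar - 1) ^ 2 := by positivity
  linarith

lemma opticalP_eq (μmax θ Istar Is R : ℝ) (hμ : 0 < μmax) (hθ : 0 < θ)
    (hIs : 0 < Is) (Y : ℝ) :
    opticalP μmax θ Istar Is R Y =
      (∫ y in (0 : ℝ)..Y, haldane μmax θ Istar (Is * Real.exp (-y))) - R * Y := by
  unfold opticalP
  rw [intervalIntegral.integral_sub
    ((haldane_cont μmax θ Istar Is hμ hθ hIs).intervalIntegrable 0 Y)
    (intervalIntegrable_const)]
  simp [mul_comm]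

theorem stmt8 (μmax θ Istar Is R α₀ Yopt : ℝ)
    (hμ : 0 < μmax) (hθ : 0 < θ) (hI : 0 < Istar) (hIs : 0 < Is)
    (hR0 : 0 < R) (hR : R < μmax) (hsurf : R < haldane μmax θ Istar Is)
    (hα₀ : 0 < α₀)
    (hYopt : 0 < Yopt)
    (hmax : ∀ Y ≥ 0, opticalP μmax θ Istar Is R Y ≤ opticalP μmax θ Istar Is R Yopt) :
    let ε : ℝ → ℝ := fun X => α₀ * X
    (∀ X > 0, ∀ h > 0,
        surfProd μmax θ Istar Is R ε X h = opticalP μmax θ Istar Is R (ε X * h) / α₀) ∧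
    (∀ X > 0, ∀ h > 0, ε X * h = Yopt →
        (∀ X' > 0, ∀ h' > 0,
            surfProd μmax θ Istar Is R ε X' h' ≤ surfProd μmax θ Istar Is R ε X h) ∧
        X * h = Yopt / α₀) := by
  intro ε
  have key : ∀ X > 0, ∀ h > 0,
      surfProd μmax θ Istar Is R ε X h = opticalP μmax θ Istar Is R (ε X * h) / α₀ := by
    intro X hX h hh
    have hεXh : ε X * h ≠ 0 := by
      have : 0 < α₀ * X * h := by positivity
      simpa [ε] using this.ne'
    unfold surfProd meanMu
    rw [opticalP_eq μmax θ Istar Is R hμ hθ hIs]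
    have hεX : ε X = α₀ * X := rfl
    field_simp [hεX]
    ring
  refine ⟨key, ?_⟩
  intro X hX h hh hY
  constructor
  · intro X' hX' h' hh'
    rw [key X hX h hh, key X' hX' h' hh', hY]
    have hge : (0 : ℝ) ≤ ε X' * h' := by
      have : 0 ≤ α₀ * X' * h' := by positivity
      simpa [ε, mul_assoc] using this
    gcongr
    exact hmax _ hge
  · have : α₀ * X * h = Yopt := by simpa [ε, mul_assoc] using hY
    field_simp
    linarith
end

section
/- Let ε(X) = α₀X + α₁ with α₀ > 0 and α₁ > 0, and Π(X,h) = (X/ε(X))·P(ε(X)h) where P has a unique global maximizer Y_opt with P strictly increasing before and strictly decreasing after. Then Π has no global maximum on (0,∞) × (0,∞). -/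
open Real Set

theorem stmt11 (α₀ α₁ Yopt : ℝ) (P : ℝ → ℝ)
    (hα₀ : 0 < α₀) (hα₁ : 0 < α₁) (hYopt : 0 < Yopt)
    (hmono : StrictMonoOn P (Icc 0 Yopt))
    (hanti : StrictAntiOn P (Ici Yopt))
    (hPpos : 0 < P Yopt) :
    ¬ ∃ X h : ℝ, 0 < X ∧ 0 < h ∧
      ∀ X' h' : ℝ, 0 < X' → 0 < h' →
        (X' / (α₀ * X' + α₁)) * P ((α₀ * X' + α₁) * h') ≤
          (X / (α₀ * X + α₁)) * P ((α₀ * X + α₁) * h) := by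
  rintro ⟨X, h, hX, hh, hmax⟩
  set ε := α₀ * X + α₁ with hε
  have hεpos : 0 < ε := by positivity
  -- P(εh) ≤ P Yopt
  have hy : 0 < ε * h := mul_pos hεpos hh
  have hPle : P (ε * h) ≤ P Yopt := by
    rcases le_total (ε * h) Yopt with hle | hge
    · exact hmono.monotoneOn ⟨hy.le, hle⟩ ⟨hYopt.le, le_refl _⟩ hle
    · exact hanti.antitoneOn (self_mem_Ici) hge hge
  -- choose X' = X + 1, h' = Yopt / ε'
  set X' := X + 1 with hX'
  have hX'pos : 0 < X' := by linarith
  set ε' := α₀ * X' + α₁ with hε'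
  have hε'pos : 0 < ε' := by positivity
  set h' := Yopt / ε' with hh'
  have hh'pos : 0 < h' := div_pos hYopt hε'pos
  have harg : ε' * h' = Yopt := by
    rw [hh', mul_div_assoc']; exact mul_div_cancel_left₀ Yopt hε'pos.ne'
  have key := hmax X' h' hX'pos hh'pos
  rw [harg] at key
  -- X/ε < X'/ε'
  have hfrac : X / ε < X' / ε' := by
    rw [div_lt_div_iff₀ hεpos hε'pos]
    nlinarith
  have h1 : (X / ε) * P (ε * h) ≤ (X / ε) * P Yopt :=
    mul_le_mul_of_nonneg_left hPle (by positivity)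
  have h2 : (X / ε) * P Yopt < (X' / ε') * P Yopt :=
    mul_lt_mul_of_pos_right hfrac hPpos
  linarith
end

section
/- Applying the quasi-steady-state reduction to the Han model (setting A = (1−C)/(τσI+1)), the resulting steady-state growth rate μ_Han(I) = kσI / ((k_d/k_r)τ(σI)² + τσI + 1) is identical to the Haldane form μ(I) = μ_max·I/(I + (μ_max/θ)(I/I*−1)²) with θ = kσ, I* = √(k_r/(k_d τ σ²)), and μ_max = kσ/(τσ + 2√(k_d τ σ²/k_r)). -/
open Real

theorem stmt18 (k σ τ kd kr : ℝ)
    (hk : 0 < k) (hσ : 0 < σ) (hτ : 0 < τ) (hkd : 0 < kd) (hkr : 0 < kr) :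
    ∀ I : ℝ, 0 < I →
      k * σ * I / ((kd / kr) * τ * (σ * I) ^ 2 + τ * σ * I + 1) =
        (k * σ / (τ * σ + 2 * Real.sqrt (kd * τ * σ ^ 2 / kr))) * I /
          (I + ((k * σ / (τ * σ + 2 * Real.sqrt (kd * τ * σ ^ 2 / kr))) / (k * σ)) *
            (I / Real.sqrt (kr / (kd * τ * σ ^ 2)) - 1) ^ 2) := by
  intro I hI
  set s := Real.sqrt (kd * τ * σ ^ 2 / kr) with hs
  have harg : 0 < kd * τ * σ ^ 2 / kr := by positivity
  have hspos : 0 < s := Real.sqrt_pos.mpr harg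
  have hs2 : s ^ 2 = kd * τ * σ ^ 2 / kr := Real.sq_sqrt harg.le
  have hinv : Real.sqrt (kr / (kd * τ * σ ^ 2)) = s⁻¹ := by
    rw [hs, ← Real.sqrt_inv]
    congr 1
    field_simp
  rw [hinv]
  have hd1 : (kd / kr) * τ * (σ * I) ^ 2 + τ * σ * I + 1 > 0 := by positivity
  have hd2 : τ * σ + 2 * s > 0 := by positivity
  have key : (kd / kr) * τ * (σ * I) ^ 2 = s ^ 2 * I ^ 2 := by
    rw [hs2]; field_simp
  have hd3 : I + (k * σ / (τ * σ + 2 * s)) / (k * σ) * (I / s⁻¹ - 1) ^ 2 > 0 := by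
    have : (k * σ / (τ * σ + 2 * s)) / (k * σ) = (τ * σ + 2 * s)⁻¹ := by
      field_simp
    rw [this]
    positivity
  rw [div_eq_div_iff (ne_of_gt hd1) (ne_of_gt hd3)]
  have hs2' : s ^ 2 * kr = kd * τ * σ ^ 2 := by
    rw [hs2]; field_simp
  field_simp
  linear_combination I ^ 2 * hs2'
end
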